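/- Let a < 0, b ∈ ℝ, λ > 0, μ > 0, and set α := λa, β := μb. Let u ∈ ℋ and define on the interior indices 𝓘: v := −α D₁,₀ u − β D₂,₀ u and w := −(α²/2) Δ₁ u − (β²/2) Δ₂ u − αβ D₁,₀ D₂,₀ u + ((α²+β²)/8) Δ₁ Δ₂ u. Then 2⟨v ; w⟩_{ℓ²(𝓘)} = −(λ|a|·(μb)²/2) · ∑_{k∈ℤ} u_{0,k} · (Δ₂ u)_{0,k+1}. -/

import Mathlib

noncomputable section

/-- Forward difference in the first variable. -/
def D1p (u : ℤ → ℤ → ℝ) : ℤ → ℤ → ℝ := fun j k => u (j + 1) k - u j k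
/-- Backward difference in the first variable. -/
def D1m (u : ℤ → ℤ → ℝ) : ℤ → ℤ → ℝ := fun j k => u j k - u (j - 1) k
/-- Forward difference in the second variable. -/
def D2p (u : ℤ → ℤ → ℝ) : ℤ → ℤ → ℝ := fun j k => u j (k + 1) - u j k
/-- Backward difference in the second variable. -/
def D2m (u : ℤ → ℤ → ℝ) : ℤ → ℤ → ℝ := fun j k => u j k - u j (k - 1)
/-- Centered difference in the first variable. -/
def D10 (u : ℤ → ℤ → ℝ) : ℤ → ℤ → ℝ := fun j k => (D1p u j k + D1m u j k) / 2
/-- Centered difference in the second variable. -/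
def D20 (u : ℤ → ℤ → ℝ) : ℤ → ℤ → ℝ := fun j k => (D2p u j k + D2m u j k) / 2
/-- Discrete Laplacian in the first variable. -/
def L1 (u : ℤ → ℤ → ℝ) : ℤ → ℤ → ℝ := D1p (D1m u)
/-- Discrete Laplacian in the second variable. -/
def L2 (u : ℤ → ℤ → ℝ) : ℤ → ℤ → ℝ := D2p (D2m u)

/-- Squared ℓ²(ℤ²) norm. -/
def sqZ (u : ℤ → ℤ → ℝ) : ℝ := ∑' p : ℤ × ℤ, (u p.1 p.2) ^ 2
/-- ℓ²(ℤ²) scalar product. -/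
def ipZ (u v : ℤ → ℤ → ℝ) : ℝ := ∑' p : ℤ × ℤ, u p.1 p.2 * v p.1 p.2

/-- Squared ℓ²(𝓘) norm over the interior indices 𝓘 = ℕ × ℤ of the half-space grid. -/
def sqH (u : ℤ → ℤ → ℝ) : ℝ := ∑' p : ℕ × ℤ, (u (p.1 : ℤ) p.2) ^ 2
/-- ℓ²(𝓘) scalar product over the interior indices 𝓘 = ℕ × ℤ. -/
def ipH (u v : ℤ → ℤ → ℝ) : ℝ := ∑' p : ℕ × ℤ, u (p.1 : ℤ) p.2 * v (p.1 : ℤ) p.2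
/-- Membership in ℋ : square-summable on the half-space grid and satisfying the
extrapolation (Neumann) boundary condition `u (-1) k = u 0 k`. -/
def memH (u : ℤ → ℤ → ℝ) : Prop :=
  (∀ k : ℤ, u (-1) k = u 0 k) ∧ Summable (fun p : ℕ × ℤ => (u (p.1 : ℤ) p.2) ^ 2)

/-- Squared ℓ²(𝔦) norm over the interior indices 𝔦 = ℕ × ℕ of the quarter-space grid. -/
def sqQ (u : ℤ → ℤ → ℝ) : ℝ := ∑' p : ℕ × ℕ, (u (p.1 : ℤ) (p.2 : ℤ)) ^ 2
/-- ℓ²(𝔦) scalar product over the interior indices 𝔦 = ℕ × ℕ. -/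
def ipQ (u v : ℤ → ℤ → ℝ) : ℝ :=
  ∑' p : ℕ × ℕ, u (p.1 : ℤ) (p.2 : ℤ) * v (p.1 : ℤ) (p.2 : ℤ)
/-- Membership in 𝔥 : square-summable on the quarter-space grid, satisfying the
extrapolation boundary conditions on both sides and the corner condition. -/
def memQ (u : ℤ → ℤ → ℝ) : Prop :=
  (∀ k : ℤ, -1 ≤ k → u (-1) k = u 0 k) ∧ (∀ j : ℤ, 0 ≤ j → u j (-1) = u j 0) ∧
    Summable (fun p : ℕ × ℕ => (u (p.1 : ℤ) (p.2 : ℤ)) ^ 2)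

/-- The skew-selfadjoint part `v` in the decomposition of the Lax-Wendroff scheme. -/
def vop (α β : ℝ) (u : ℤ → ℤ → ℝ) : ℤ → ℤ → ℝ :=
  fun j k => -α * D10 u j k - β * D20 u j k
/-- The selfadjoint part `w` in the decomposition of the Lax-Wendroff scheme. -/
def wop (α β : ℝ) (u : ℤ → ℤ → ℝ) : ℤ → ℤ → ℝ :=
  fun j k => -(α ^ 2 / 2) * L1 u j k - (β ^ 2 / 2) * L2 u j k
    - α * β * D10 (D20 u) j k + ((α ^ 2 + β ^ 2) / 8) * L1 (L2 u) j k

section Infra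

variable {ι : Type*}

lemma comb2 {A B : ι → ℝ} (c1 c2 : ℝ) (hA : Summable A) (hB : Summable B) :
    ∑' p, (c1 * A p + c2 * B p) = c1 * ∑' p, A p + c2 * ∑' p, B p := by
  rw [Summable.tsum_add ((hA.mul_left c1)) ((hB.mul_left c2)), tsum_mul_left, tsum_mul_left]

lemma comb3 {A B C : ι → ℝ} (c1 c2 c3 : ℝ) (hA : Summable A) (hB : Summable B)
    (hC : Summable C) :
    ∑' p, (c1 * A p + c2 * B p + c3 * C p)
      = c1 * ∑' p, A p + c2 * ∑' p, B p + c3 * ∑' p, C p := by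
  rw [Summable.tsum_add ((hA.mul_left c1).add (hB.mul_left c2)) (hC.mul_left c3),
    comb2 c1 c2 hA hB, tsum_mul_left]

lemma comb4 {A B C D : ι → ℝ} (c1 c2 c3 c4 : ℝ) (hA : Summable A) (hB : Summable B)
    (hC : Summable C) (hD : Summable D) :
    ∑' p, (c1 * A p + c2 * B p + c3 * C p + c4 * D p)
      = c1 * ∑' p, A p + c2 * ∑' p, B p + c3 * ∑' p, C p + c4 * ∑' p, D p := by
  rw [Summable.tsum_add (((hA.mul_left c1).add (hB.mul_left c2)).add (hC.mul_left c3)) (hD.mul_left c4),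
    comb3 c1 c2 c3 hA hB hC, tsum_mul_left]

end Infra

lemma fiber_summable (F : ℕ × ℤ → ℝ) (hF : Summable F) (j : ℕ) :
    Summable (fun k : ℤ => F (j, k)) :=
  hF.comp_injective (fun a b h => by simpa using congrArg Prod.snd h :
    Function.Injective (fun k : ℤ => (j, k)))

lemma jmove (F : ℕ × ℤ → ℝ) (hF : Summable F) :
    ∑' p : ℕ × ℤ, F (p.1 + 1, p.2) = ∑' p : ℕ × ℤ, F p - ∑' k : ℤ, F (0, k) := by
  have hfib : ∀ j : ℕ, HasSum (fun k : ℤ => F (j, k)) (∑' k, F (j, k)) :=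
    fun j => (fiber_summable F hF j).hasSum
  have hG : HasSum (fun j : ℕ => ∑' k, F (j, k)) (∑' p, F p) :=
    HasSum.prod_fiberwise hF.hasSum hfib
  have hF' : Summable (fun p : ℕ × ℤ => F (p.1 + 1, p.2)) := by
    have : Function.Injective (fun p : ℕ × ℤ => (p.1 + 1, p.2) : ℕ × ℤ → ℕ × ℤ) := by
      intro a b h
      have h1 := congrArg Prod.fst h; have h2 := congrArg Prod.snd h
      simp at h1 h2; exact Prod.ext h1 h2
    exact hF.comp_injective this
  have hfib' : ∀ j : ℕ, HasSum (fun k : ℤ => F (j + 1, k)) (∑' k, F (j + 1, k)) :=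
    fun j => (fiber_summable F hF (j + 1)).hasSum
  have hG' : HasSum (fun j : ℕ => ∑' k, F (j + 1, k)) (∑' p : ℕ × ℤ, F (p.1 + 1, p.2)) :=
    HasSum.prod_fiberwise hF'.hasSum hfib'
  have h0 := Summable.tsum_eq_zero_add hG.summable
  rw [hG'.tsum_eq.symm] at *
  rw [← hG.tsum_eq, h0]
  ring

lemma kmove (F : ℕ × ℤ → ℝ) (t : ℤ) :
    ∑' p : ℕ × ℤ, F (p.1, p.2 + t) = ∑' p : ℕ × ℤ, F p := by
  have := ((Equiv.refl ℕ).prodCongr (Equiv.addRight t)).tsum_eq F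
  simpa [Prod.map] using this

def Sq (f : ℤ → ℤ → ℝ) : Prop := Summable (fun p : ℕ × ℤ => (f (p.1 : ℤ) p.2) ^ 2)
def Nb (f : ℤ → ℤ → ℝ) : Prop := ∀ k : ℤ, f (-1) k = f 0 k

lemma sq_congr {f g : ℤ → ℤ → ℝ} (h : ∀ (j : ℕ) (k : ℤ), f j k = g j k) (hf : Sq f) : Sq g := by
  unfold Sq at *; convert hf using 2 with p; rw [h]

lemma prodSum {f g : ℤ → ℤ → ℝ} (hf : Sq f) (hg : Sq g) :
    Summable (fun p : ℕ × ℤ => f (p.1 : ℤ) p.2 * g (p.1 : ℤ) p.2) := by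
  apply Summable.of_abs
  apply Summable.of_nonneg_of_le (fun p => abs_nonneg _)
    (fun p => ?_) (((hf.add hg).div_const 2))
  rw [abs_mul]
  calc |f p.1 p.2| * |g p.1 p.2| ≤ (|f p.1 p.2| ^ 2 + |g p.1 p.2| ^ 2) / 2 := by
        nlinarith [sq_nonneg (|f p.1 p.2| - |g p.1 p.2|)]
  _ = (f p.1 p.2 ^ 2 + g p.1 p.2 ^ 2) / 2 := by rw [sq_abs, sq_abs]

lemma sq_smul {f : ℤ → ℤ → ℝ} (c : ℝ) (hf : Sq f) : Sq (fun j k => c * f j k) := by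
  unfold Sq at *
  have := hf.mul_left (c ^ 2)
  exact this.congr (fun p => by ring)

lemma sq_add {f g : ℤ → ℤ → ℝ} (hf : Sq f) (hg : Sq g) : Sq (fun j k => f j k + g j k) := by
  unfold Sq at *
  have h := (hf.add hg).add ((prodSum hf hg).mul_left 2)
  convert h using 2 with p; ring

lemma sq_sub {f g : ℤ → ℤ → ℝ} (hf : Sq f) (hg : Sq g) : Sq (fun j k => f j k - g j k) := by
  have := sq_add hf (sq_smul (-1) hg); apply sq_congr _ this; intro j k; simp; ring

lemma sq_k {f : ℤ → ℤ → ℝ} (t : ℤ) (hf : Sq f) : Sq (fun j k => f j (k + t)) := by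
  unfold Sq at *
  have := (((Equiv.refl ℕ).prodCongr (Equiv.addRight t)).summable_iff
    (f := fun p : ℕ × ℤ => (f (p.1 : ℤ) p.2) ^ 2)).2 hf
  simpa [Function.comp_def, Prod.map] using this

lemma sq_km {f : ℤ → ℤ → ℝ} (hf : Sq f) : Sq (fun j k => f j (k - 1)) := by
  apply sq_congr _ (sq_k (-1) hf); intro j k; norm_num [sub_eq_add_neg]

lemma sq_jp {f : ℤ → ℤ → ℝ} (hf : Sq f) : Sq (fun j k => f (j + 1) k) := by
  unfold Sq at *
  have hinj : Function.Injective (fun p : ℕ × ℤ => ((p.1 + 1, p.2) : ℕ × ℤ)) := by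
    intro a b h
    have h1 := congrArg Prod.fst h; have h2 := congrArg Prod.snd h
    simp at h1 h2; exact Prod.ext h1 h2
  have := hf.comp_injective hinj
  exact this.congr (fun p => by simp)

lemma sq_jm {f : ℤ → ℤ → ℝ} (hf : Sq f) (hb : Nb f) : Sq (fun j k => f (j - 1) k) := by
  unfold Sq at *
  have hA : Summable (fun p : ℕ × ℤ => if p.1 = 0 then (f 0 p.2) ^ 2 else 0) := by
    have hinj : Function.Injective (fun k : ℤ => ((0, k) : ℕ × ℤ)) := by
      intro a b h; simpa using congrArg Prod.snd h
    rw [← hinj.summable_iff (by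
      intro p hp
      rcases p with ⟨j, k⟩
      rcases Nat.eq_zero_or_pos j with h0 | h0
      · exact absurd ⟨k, by simp [h0]⟩ hp
      · simp [Nat.pos_iff_ne_zero.mp h0])]
    have := hf.comp_injective (fun a b h => by simpa using congrArg Prod.snd h :
      Function.Injective (fun k : ℤ => ((0, k) : ℕ × ℤ)))
    simpa [Function.comp_def] using this
  have hB : Summable (fun p : ℕ × ℤ => if p.1 = 0 then 0 else (f ((p.1 : ℤ) - 1) p.2) ^ 2) := by
    have hinj : Function.Injective (fun p : ℕ × ℤ => ((p.1 + 1, p.2) : ℕ × ℤ)) := by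
      intro a b h
      have h1 := congrArg Prod.fst h; have h2 := congrArg Prod.snd h
      simp at h1 h2; exact Prod.ext h1 h2
    rw [← hinj.summable_iff (by
      intro p hp
      rcases p with ⟨j, k⟩
      rcases Nat.eq_zero_or_pos j with h0 | h0
      · simp [h0]
      · exact absurd ⟨(j - 1, k), Prod.ext (show j - 1 + 1 = j by omega) rfl⟩ hp)]
    convert hf using 2 with p
    simp [Function.comp]
  have := hA.add hB
  convert this using 2 with p
  rcases p with ⟨j, k⟩
  rcases Nat.eq_zero_or_pos j with h0 | h0
  · simp [h0, ← hb k]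
  · simp [Nat.pos_iff_ne_zero.mp h0]
-- pointwise formulas
lemma D10_eq (u : ℤ → ℤ → ℝ) (j k : ℤ) : D10 u j k = (u (j + 1) k - u (j - 1) k) / 2 := by
  unfold D10 D1p D1m; ring
lemma D20_eq (u : ℤ → ℤ → ℝ) (j k : ℤ) : D20 u j k = (u j (k + 1) - u j (k - 1)) / 2 := by
  unfold D20 D2p D2m; ring
lemma L1_eq (u : ℤ → ℤ → ℝ) (j k : ℤ) : L1 u j k = u (j + 1) k - 2 * u j k + u (j - 1) k := by
  unfold L1 D1p D1m; rw [show j + 1 - 1 = j by ring]; ring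
lemma L2_eq (u : ℤ → ℤ → ℝ) (j k : ℤ) : L2 u j k = u j (k + 1) - 2 * u j k + u j (k - 1) := by
  unfold L2 D2p D2m; rw [show k + 1 - 1 = k by ring]; ring

-- Sq instances
lemma sq_D10 {f : ℤ → ℤ → ℝ} (hf : Sq f) (hb : Nb f) : Sq (D10 f) := by
  apply sq_congr _ (sq_smul (1/2) (sq_sub (sq_jp hf) (sq_jm hf hb)))
  intro j k; rw [D10_eq]; ring
lemma sq_D20 {f : ℤ → ℤ → ℝ} (hf : Sq f) : Sq (D20 f) := by
  apply sq_congr _ (sq_smul (1/2) (sq_sub (sq_k 1 hf) (sq_km hf)))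
  intro j k; rw [D20_eq]; ring
lemma sq_D2m {f : ℤ → ℤ → ℝ} (hf : Sq f) : Sq (D2m f) := by
  apply sq_congr _ (sq_sub hf (sq_km hf))
  intro j k; rfl
lemma sq_L1 {f : ℤ → ℤ → ℝ} (hf : Sq f) (hb : Nb f) : Sq (L1 f) := by
  apply sq_congr _ (sq_add (sq_sub (sq_jp hf) (sq_smul 2 hf)) (sq_jm hf hb))
  intro j k; rw [L1_eq]
lemma sq_L2 {f : ℤ → ℤ → ℝ} (hf : Sq f) : Sq (L2 f) := by
  apply sq_congr _ (sq_add (sq_sub (sq_k 1 hf) (sq_smul 2 hf)) (sq_km hf))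
  intro j k; rw [L2_eq]

-- Nb instances
lemma nb_D20 {f : ℤ → ℤ → ℝ} (hb : Nb f) : Nb (D20 f) := by
  intro k; rw [D20_eq, D20_eq, hb, hb]
lemma nb_D2m {f : ℤ → ℤ → ℝ} (hb : Nb f) : Nb (D2m f) := by
  intro k; unfold D2m; rw [hb, hb]
lemma nb_L2 {f : ℤ → ℤ → ℝ} (hb : Nb f) : Nb (L2 f) := by
  intro k; rw [L2_eq, L2_eq, hb, hb, hb]

-- commutation of operators
lemma cDD : ∀ u : ℤ → ℤ → ℝ, D10 (D20 u) = D20 (D10 u) := by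
  intro u; funext j k; simp only [D10_eq, D20_eq, L1_eq, L2_eq, D2p, D2m, D1p, D1m]; ring
lemma cD10L2 : ∀ u : ℤ → ℤ → ℝ, D10 (L2 u) = L2 (D10 u) := by
  intro u; funext j k; simp only [D10_eq, D20_eq, L1_eq, L2_eq, D2p, D2m, D1p, D1m]; ring
lemma cD20L1 : ∀ u : ℤ → ℤ → ℝ, D20 (L1 u) = L1 (D20 u) := by
  intro u; funext j k; simp only [D10_eq, D20_eq, L1_eq, L2_eq, D2p, D2m, D1p, D1m]; ring
lemma cD20L2 : ∀ u : ℤ → ℤ → ℝ, D20 (L2 u) = L2 (D20 u) := by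
  intro u; funext j k; simp only [D10_eq, D20_eq, L1_eq, L2_eq, D2p, D2m, D1p, D1m]; ring
lemma cL1L2 : ∀ u : ℤ → ℤ → ℝ, L1 (L2 u) = L2 (L1 u) := by
  intro u; funext j k; simp only [D10_eq, D20_eq, L1_eq, L2_eq, D2p, D2m, D1p, D1m]; ring
lemma cL1L2' : ∀ u : ℤ → ℤ → ℝ, L1 (L2 u) = D2p (D2m (L1 u)) := by
  intro u; funext j k; simp only [D10_eq, D20_eq, L1_eq, L2_eq, D2p, D2m, D1p, D1m]; ring
lemma cD2mD10 : ∀ u : ℤ → ℤ → ℝ, D2m (D10 u) = D10 (D2m u) := by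
  intro u; funext j k; simp only [D10_eq, D20_eq, L1_eq, L2_eq, D2p, D2m, D1p, D1m]; ring
lemma cD2mL1 : ∀ u : ℤ → ℤ → ℝ, D2m (L1 u) = L1 (D2m u) := by
  intro u; funext j k; simp only [D10_eq, D20_eq, L1_eq, L2_eq, D2p, D2m, D1p, D1m]; ring
lemma cL1L2'' : ∀ u : ℤ → ℤ → ℝ, L1 (L2 (D20 u)) = L2 (D20 (L1 u)) := by
  intro u; funext j k; simp only [D10_eq, D20_eq, L1_eq, L2_eq, D2p, D2m, D1p, D1m]; ring

lemma ipH_comm (f g : ℤ → ℤ → ℝ) : ipH f g = ipH g f :=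
  tsum_congr fun p => mul_comm _ _
-- k-shift relations for products
lemma kprod (f g : ℤ → ℤ → ℝ) :
    ∑' p : ℕ × ℤ, f (p.1 : ℤ) p.2 * g (p.1 : ℤ) (p.2 + 1)
      = ∑' p : ℕ × ℤ, f (p.1 : ℤ) (p.2 - 1) * g (p.1 : ℤ) p.2 := by
  have h := kmove (fun p : ℕ × ℤ => f (p.1 : ℤ) (p.2 - 1) * g (p.1 : ℤ) p.2) 1
  rw [← h]; apply tsum_congr; intro p; simp

lemma kprod' (f g : ℤ → ℤ → ℝ) :
    ∑' p : ℕ × ℤ, f (p.1 : ℤ) p.2 * g (p.1 : ℤ) (p.2 - 1)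
      = ∑' p : ℕ × ℤ, f (p.1 : ℤ) (p.2 + 1) * g (p.1 : ℤ) p.2 := by
  have h := kmove (fun p : ℕ × ℤ => f (p.1 : ℤ) (p.2 + 1) * g (p.1 : ℤ) p.2) (-1)
  rw [← h]; apply tsum_congr; intro p
  rw [show p.2 + -1 + 1 = p.2 by ring, show p.2 + -1 = p.2 - 1 by ring]

-- j-shift relation with boundary row
lemma jmove' (G : ℤ → ℤ → ℝ) (hG : Summable (fun p : ℕ × ℤ => G (p.1 : ℤ) p.2)) :
    ∑' p : ℕ × ℤ, G ((p.1 : ℤ) + 1) p.2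
      = ∑' p : ℕ × ℤ, G (p.1 : ℤ) p.2 - ∑' k : ℤ, G 0 k := by
  have h := jmove (fun p : ℕ × ℤ => G (p.1 : ℤ) p.2) hG
  have e1 : ∑' p : ℕ × ℤ, G ((p.1 : ℤ) + 1) p.2
      = ∑' p : ℕ × ℤ, (fun q : ℕ × ℤ => G (q.1 : ℤ) q.2) (p.1 + 1, p.2) := by
    apply tsum_congr; intro p
    have e : ((p.1 + 1 : ℕ) : ℤ) = (p.1 : ℤ) + 1 := by push_cast; ring
    simp only [e]
  rw [e1, h]
  norm_num

lemma jrel1 {f g : ℤ → ℤ → ℝ}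
    (hH : Summable (fun p : ℕ × ℤ => f ((p.1 : ℤ) - 1) p.2 * g (p.1 : ℤ) p.2)) :
    ∑' p : ℕ × ℤ, f (p.1 : ℤ) p.2 * g ((p.1 : ℤ) + 1) p.2
      = ∑' p : ℕ × ℤ, f ((p.1 : ℤ) - 1) p.2 * g (p.1 : ℤ) p.2 - ∑' k : ℤ, f (-1) k * g 0 k := by
  have h := jmove' (fun j k => f (j - 1) k * g j k) hH
  simp only [add_sub_cancel_right, zero_sub] at h
  exact h

lemma jrelmm {f g : ℤ → ℤ → ℝ}
    (hH : Summable (fun p : ℕ × ℤ => f ((p.1 : ℤ) - 1) p.2 * g ((p.1 : ℤ) - 1) p.2)) :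
    ∑' p : ℕ × ℤ, f (p.1 : ℤ) p.2 * g (p.1 : ℤ) p.2
      = ∑' p : ℕ × ℤ, f ((p.1 : ℤ) - 1) p.2 * g ((p.1 : ℤ) - 1) p.2
        - ∑' k : ℤ, f (-1) k * g (-1) k := by
  have h := jmove' (fun j k => f (j - 1) k * g (j - 1) k) hH
  simp only [add_sub_cancel_right, zero_sub] at h
  exact h

lemma jrelsq' {f : ℤ → ℤ → ℝ} (hf : Sq f) :
    ∑' p : ℕ × ℤ, f ((p.1 : ℤ) + 1) p.2 ^ 2
      = ∑' p : ℕ × ℤ, f (p.1 : ℤ) p.2 ^ 2 - ∑' k : ℤ, f 0 k ^ 2 :=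
  jmove' (fun j k => f j k ^ 2) hf

lemma jrelsq {f : ℤ → ℤ → ℝ} (hf : Sq f) (hb : Nb f) :
    ∑' p : ℕ × ℤ, f ((p.1 : ℤ) - 1) p.2 ^ 2
      = ∑' p : ℕ × ℤ, f (p.1 : ℤ) p.2 ^ 2 + ∑' k : ℤ, f 0 k ^ 2 := by
  have h := jmove' (fun j k => f (j - 1) k ^ 2) (sq_jm hf hb)
  simp only [add_sub_cancel_right, zero_sub] at h
  have e : ∑' k : ℤ, f (-1) k ^ 2 = ∑' k : ℤ, f 0 k ^ 2 :=
    tsum_congr fun k => by rw [hb k]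
  rw [e] at h
  linarith

-- k-direction adjointness
lemma kskew {f g : ℤ → ℤ → ℝ} (hf : Sq f) (hg : Sq g) : ipH f (D20 g) = -ipH (D20 f) g := by
  have hA : Summable (fun p : ℕ × ℤ => f (p.1 : ℤ) p.2 * g (p.1 : ℤ) (p.2 + 1)) :=
    prodSum (f := f) (g := fun j k => g j (k + 1)) hf (sq_k 1 hg)
  have hB : Summable (fun p : ℕ × ℤ => f (p.1 : ℤ) p.2 * g (p.1 : ℤ) (p.2 - 1)) :=
    prodSum (f := f) (g := fun j k => g j (k - 1)) hf (sq_km hg)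
  have hC : Summable (fun p : ℕ × ℤ => f (p.1 : ℤ) (p.2 + 1) * g (p.1 : ℤ) p.2) :=
    prodSum (f := fun j k => f j (k + 1)) (g := g) (sq_k 1 hf) hg
  have hD : Summable (fun p : ℕ × ℤ => f (p.1 : ℤ) (p.2 - 1) * g (p.1 : ℤ) p.2) :=
    prodSum (f := fun j k => f j (k - 1)) (g := g) (sq_km hf) hg
  have e1 : ipH f (D20 g) = (1/2) * (∑' p : ℕ × ℤ, f (p.1 : ℤ) p.2 * g (p.1 : ℤ) (p.2 + 1))
      + (-(1/2)) * ∑' p : ℕ × ℤ, f (p.1 : ℤ) p.2 * g (p.1 : ℤ) (p.2 - 1) := by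
    rw [← comb2 (1/2) (-(1/2)) hA hB]
    apply tsum_congr; intro p; rw [D20_eq]; ring
  have e2 : ipH (D20 f) g = (1/2) * (∑' p : ℕ × ℤ, f (p.1 : ℤ) (p.2 + 1) * g (p.1 : ℤ) p.2)
      + (-(1/2)) * ∑' p : ℕ × ℤ, f (p.1 : ℤ) (p.2 - 1) * g (p.1 : ℤ) p.2 := by
    rw [← comb2 (1/2) (-(1/2)) hC hD]
    apply tsum_congr; intro p; rw [D20_eq]; ring
  rw [e1, e2, kprod f g, kprod' f g]; ring

lemma ksym {f g : ℤ → ℤ → ℝ} (hf : Sq f) (hg : Sq g) : ipH f (L2 g) = ipH (L2 f) g := by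
  have hA : Summable (fun p : ℕ × ℤ => f (p.1 : ℤ) p.2 * g (p.1 : ℤ) (p.2 + 1)) :=
    prodSum (f := f) (g := fun j k => g j (k + 1)) hf (sq_k 1 hg)
  have hB : Summable (fun p : ℕ × ℤ => f (p.1 : ℤ) p.2 * g (p.1 : ℤ) (p.2 - 1)) :=
    prodSum (f := f) (g := fun j k => g j (k - 1)) hf (sq_km hg)
  have hC : Summable (fun p : ℕ × ℤ => f (p.1 : ℤ) (p.2 + 1) * g (p.1 : ℤ) p.2) :=
    prodSum (f := fun j k => f j (k + 1)) (g := g) (sq_k 1 hf) hg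
  have hD : Summable (fun p : ℕ × ℤ => f (p.1 : ℤ) (p.2 - 1) * g (p.1 : ℤ) p.2) :=
    prodSum (f := fun j k => f j (k - 1)) (g := g) (sq_km hf) hg
  have hE : Summable (fun p : ℕ × ℤ => f (p.1 : ℤ) p.2 * g (p.1 : ℤ) p.2) := prodSum hf hg
  have e1 : ipH f (L2 g) = 1 * (∑' p : ℕ × ℤ, f (p.1 : ℤ) p.2 * g (p.1 : ℤ) (p.2 + 1))
      + (-2) * (∑' p : ℕ × ℤ, f (p.1 : ℤ) p.2 * g (p.1 : ℤ) p.2)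
      + 1 * ∑' p : ℕ × ℤ, f (p.1 : ℤ) p.2 * g (p.1 : ℤ) (p.2 - 1) := by
    rw [← comb3 1 (-2) 1 hA hE hB]
    apply tsum_congr; intro p; rw [L2_eq]; ring
  have e2 : ipH (L2 f) g = 1 * (∑' p : ℕ × ℤ, f (p.1 : ℤ) (p.2 + 1) * g (p.1 : ℤ) p.2)
      + (-2) * (∑' p : ℕ × ℤ, f (p.1 : ℤ) p.2 * g (p.1 : ℤ) p.2)
      + 1 * ∑' p : ℕ × ℤ, f (p.1 : ℤ) (p.2 - 1) * g (p.1 : ℤ) p.2 := by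
    rw [← comb3 1 (-2) 1 hC hE hD]
    apply tsum_congr; intro p; rw [L2_eq]; ring
  rw [e1, e2, kprod f g, kprod' f g]; ring

lemma kadj {f g : ℤ → ℤ → ℝ} (hf : Sq f) (hg : Sq g) : ipH f (D2p g) = -ipH (D2m f) g := by
  have hA : Summable (fun p : ℕ × ℤ => f (p.1 : ℤ) p.2 * g (p.1 : ℤ) (p.2 + 1)) :=
    prodSum (f := f) (g := fun j k => g j (k + 1)) hf (sq_k 1 hg)
  have hD : Summable (fun p : ℕ × ℤ => f (p.1 : ℤ) (p.2 - 1) * g (p.1 : ℤ) p.2) :=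
    prodSum (f := fun j k => f j (k - 1)) (g := g) (sq_km hf) hg
  have hE : Summable (fun p : ℕ × ℤ => f (p.1 : ℤ) p.2 * g (p.1 : ℤ) p.2) := prodSum hf hg
  have e1 : ipH f (D2p g) = 1 * (∑' p : ℕ × ℤ, f (p.1 : ℤ) p.2 * g (p.1 : ℤ) (p.2 + 1))
      + (-1) * ∑' p : ℕ × ℤ, f (p.1 : ℤ) p.2 * g (p.1 : ℤ) p.2 := by
    rw [← comb2 1 (-1) hA hE]
    apply tsum_congr; intro p; unfold D2p; ring
  have e2 : ipH (D2m f) g = 1 * (∑' p : ℕ × ℤ, f (p.1 : ℤ) p.2 * g (p.1 : ℤ) p.2)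
      + (-1) * ∑' p : ℕ × ℤ, f (p.1 : ℤ) (p.2 - 1) * g (p.1 : ℤ) p.2 := by
    rw [← comb2 1 (-1) hE hD]
    apply tsum_congr; intro p; unfold D2m; ring
  rw [e1, e2, kprod f g]; ring

-- j-direction lemmas
lemma jlem {f g : ℤ → ℤ → ℝ} (hf : Sq f) (hg : Sq g) (hbf : Nb f) (hbg : Nb g) :
    ipH f (D10 g) + ipH (D10 f) g = -∑' k : ℤ, f 0 k * g 0 k := by
  have hP01 : Summable (fun p : ℕ × ℤ => f (p.1 : ℤ) p.2 * g ((p.1 : ℤ) + 1) p.2) :=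
    prodSum (f := f) (g := fun j k => g (j + 1) k) hf (sq_jp hg)
  have hP0m : Summable (fun p : ℕ × ℤ => f (p.1 : ℤ) p.2 * g ((p.1 : ℤ) - 1) p.2) :=
    prodSum (f := f) (g := fun j k => g (j - 1) k) hf (sq_jm hg hbg)
  have hPm0 : Summable (fun p : ℕ × ℤ => f ((p.1 : ℤ) - 1) p.2 * g (p.1 : ℤ) p.2) :=
    prodSum (f := fun j k => f (j - 1) k) (g := g) (sq_jm hf hbf) hg
  have hP10 : Summable (fun p : ℕ × ℤ => f ((p.1 : ℤ) + 1) p.2 * g (p.1 : ℤ) p.2) :=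
    prodSum (f := fun j k => f (j + 1) k) (g := g) (sq_jp hf) hg
  have e1 : ipH f (D10 g) = (1/2) * (∑' p : ℕ × ℤ, f (p.1 : ℤ) p.2 * g ((p.1 : ℤ) + 1) p.2)
      + (-(1/2)) * ∑' p : ℕ × ℤ, f (p.1 : ℤ) p.2 * g ((p.1 : ℤ) - 1) p.2 := by
    rw [← comb2 (1/2) (-(1/2)) hP01 hP0m]
    apply tsum_congr; intro p; rw [D10_eq]; ring
  have e2 : ipH (D10 f) g = (1/2) * (∑' p : ℕ × ℤ, f ((p.1 : ℤ) + 1) p.2 * g (p.1 : ℤ) p.2)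
      + (-(1/2)) * ∑' p : ℕ × ℤ, f ((p.1 : ℤ) - 1) p.2 * g (p.1 : ℤ) p.2 := by
    rw [← comb2 (1/2) (-(1/2)) hP10 hPm0]
    apply tsum_congr; intro p; rw [D10_eq]; ring
  have r1 := jrel1 hPm0
  have r2 : ∑' p : ℕ × ℤ, f ((p.1 : ℤ) + 1) p.2 * g (p.1 : ℤ) p.2
      = ∑' p : ℕ × ℤ, f (p.1 : ℤ) p.2 * g ((p.1 : ℤ) - 1) p.2 - ∑' k : ℤ, f 0 k * g (-1) k := by
    have h := jrel1 (f := g) (g := f) (by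
      have := hP0m
      apply Summable.congr this
      intro p; ring)
    have c1 : ∑' p : ℕ × ℤ, f ((p.1 : ℤ) + 1) p.2 * g (p.1 : ℤ) p.2
        = ∑' p : ℕ × ℤ, g (p.1 : ℤ) p.2 * f ((p.1 : ℤ) + 1) p.2 := tsum_congr fun p => mul_comm _ _
    have c2 : ∑' p : ℕ × ℤ, g ((p.1 : ℤ) - 1) p.2 * f (p.1 : ℤ) p.2
        = ∑' p : ℕ × ℤ, f (p.1 : ℤ) p.2 * g ((p.1 : ℤ) - 1) p.2 := tsum_congr fun p => mul_comm _ _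
    have c3 : ∑' k : ℤ, g (-1) k * f 0 k = ∑' k : ℤ, f 0 k * g (-1) k :=
      tsum_congr fun k => mul_comm _ _
    rw [c1, h, c2, c3]
  have b1 : ∑' k : ℤ, f (-1) k * g 0 k = ∑' k : ℤ, f 0 k * g 0 k :=
    tsum_congr fun k => by rw [hbf k]
  have b2 : ∑' k : ℤ, f 0 k * g (-1) k = ∑' k : ℤ, f 0 k * g 0 k :=
    tsum_congr fun k => by rw [hbg k]
  rw [b1] at r1; rw [b2] at r2
  rw [e1, e2, r1, r2]; ring

lemma jhalf {f g : ℤ → ℤ → ℝ} (hf : Sq f) (hg : Sq g) (hbf : Nb f) (hbg : Nb g) :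
    ipH f (L1 g) = -∑' p : ℕ × ℤ,
      ((f (p.1 : ℤ) p.2 - f ((p.1 : ℤ) - 1) p.2) * (g (p.1 : ℤ) p.2 - g ((p.1 : ℤ) - 1) p.2)) := by
  have hP01 : Summable (fun p : ℕ × ℤ => f (p.1 : ℤ) p.2 * g ((p.1 : ℤ) + 1) p.2) :=
    prodSum (f := f) (g := fun j k => g (j + 1) k) hf (sq_jp hg)
  have hP00 : Summable (fun p : ℕ × ℤ => f (p.1 : ℤ) p.2 * g (p.1 : ℤ) p.2) := prodSum hf hg
  have hP0m : Summable (fun p : ℕ × ℤ => f (p.1 : ℤ) p.2 * g ((p.1 : ℤ) - 1) p.2) :=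
    prodSum (f := f) (g := fun j k => g (j - 1) k) hf (sq_jm hg hbg)
  have hPm0 : Summable (fun p : ℕ × ℤ => f ((p.1 : ℤ) - 1) p.2 * g (p.1 : ℤ) p.2) :=
    prodSum (f := fun j k => f (j - 1) k) (g := g) (sq_jm hf hbf) hg
  have hPmm : Summable (fun p : ℕ × ℤ => f ((p.1 : ℤ) - 1) p.2 * g ((p.1 : ℤ) - 1) p.2) :=
    prodSum (f := fun j k => f (j - 1) k) (g := fun j k => g (j - 1) k) (sq_jm hf hbf) (sq_jm hg hbg)
  have e1 : ipH f (L1 g) = 1 * (∑' p : ℕ × ℤ, f (p.1 : ℤ) p.2 * g ((p.1 : ℤ) + 1) p.2)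
      + (-2) * (∑' p : ℕ × ℤ, f (p.1 : ℤ) p.2 * g (p.1 : ℤ) p.2)
      + 1 * ∑' p : ℕ × ℤ, f (p.1 : ℤ) p.2 * g ((p.1 : ℤ) - 1) p.2 := by
    rw [← comb3 1 (-2) 1 hP01 hP00 hP0m]
    apply tsum_congr; intro p; rw [L1_eq]; ring
  have e2 : ∑' p : ℕ × ℤ,
      ((f (p.1 : ℤ) p.2 - f ((p.1 : ℤ) - 1) p.2) * (g (p.1 : ℤ) p.2 - g ((p.1 : ℤ) - 1) p.2))
      = 1 * (∑' p : ℕ × ℤ, f (p.1 : ℤ) p.2 * g (p.1 : ℤ) p.2)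
      + (-1) * (∑' p : ℕ × ℤ, f (p.1 : ℤ) p.2 * g ((p.1 : ℤ) - 1) p.2)
      + (-1) * (∑' p : ℕ × ℤ, f ((p.1 : ℤ) - 1) p.2 * g (p.1 : ℤ) p.2)
      + 1 * ∑' p : ℕ × ℤ, f ((p.1 : ℤ) - 1) p.2 * g ((p.1 : ℤ) - 1) p.2 := by
    rw [← comb4 1 (-1) (-1) 1 hP00 hP0m hPm0 hPmm]
    apply tsum_congr; intro p; ring
  have r1 := jrel1 hPm0
  have r3 := jrelmm hPmm
  have b1 : ∑' k : ℤ, f (-1) k * g 0 k = ∑' k : ℤ, f 0 k * g 0 k :=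
    tsum_congr fun k => by rw [hbf k]
  have b3 : ∑' k : ℤ, f (-1) k * g (-1) k = ∑' k : ℤ, f 0 k * g 0 k :=
    tsum_congr fun k => by rw [hbf k, hbg k]
  rw [b1] at r1; rw [b3] at r3
  rw [e1, e2, r1]
  linarith

lemma jsym {f g : ℤ → ℤ → ℝ} (hf : Sq f) (hg : Sq g) (hbf : Nb f) (hbg : Nb g) :
    ipH f (L1 g) = ipH (L1 f) g := by
  rw [jhalf hf hg hbf hbg, ipH_comm, jhalf hg hf hbg hbf]
  exact neg_inj.2 (tsum_congr fun p => by ring)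

lemma alem {f : ℤ → ℤ → ℝ} (hf : Sq f) (hb : Nb f) : ipH (D10 f) (L1 f) = 0 := by
  have hx : Summable (fun p : ℕ × ℤ => f ((p.1 : ℤ) + 1) p.2 ^ 2) := sq_jp (f := f) hf
  have hz : Summable (fun p : ℕ × ℤ => f ((p.1 : ℤ) - 1) p.2 ^ 2) := sq_jm hf hb
  have hxy : Summable (fun p : ℕ × ℤ => f (p.1 : ℤ) p.2 * f ((p.1 : ℤ) + 1) p.2) :=
    prodSum (f := f) (g := fun j k => f (j + 1) k) hf (sq_jp hf)
  have hyz : Summable (fun p : ℕ × ℤ => f ((p.1 : ℤ) - 1) p.2 * f (p.1 : ℤ) p.2) :=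
    prodSum (f := fun j k => f (j - 1) k) (g := f) (sq_jm hf hb) hf
  have e : ipH (D10 f) (L1 f) = (1/2) * (∑' p : ℕ × ℤ, f ((p.1 : ℤ) + 1) p.2 ^ 2)
      + (-(1/2)) * (∑' p : ℕ × ℤ, f ((p.1 : ℤ) - 1) p.2 ^ 2)
      + (-1) * (∑' p : ℕ × ℤ, f (p.1 : ℤ) p.2 * f ((p.1 : ℤ) + 1) p.2)
      + 1 * ∑' p : ℕ × ℤ, f ((p.1 : ℤ) - 1) p.2 * f (p.1 : ℤ) p.2 := by
    rw [← comb4 (1/2) (-(1/2)) (-1) 1 hx hz hxy hyz]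
    apply tsum_congr; intro p; rw [D10_eq, L1_eq]; ring
  have rx := jrelsq' hf
  have rz := jrelsq hf hb
  have rxy := jrel1 (f := f) (g := f) hyz
  have b1 : ∑' k : ℤ, f (-1) k * f 0 k = ∑' k : ℤ, f 0 k ^ 2 :=
    tsum_congr fun k => by rw [hb k]; ring
  rw [b1] at rxy
  rw [e, rx, rz, rxy]; ring

lemma blem {f : ℤ → ℤ → ℝ} (hf : Sq f) (hb : Nb f) :
    ipH f (D10 f) = -(1/2) * ∑' k : ℤ, f 0 k ^ 2 := by
  have h := jlem hf hf hb hb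
  rw [ipH_comm (D10 f) f] at h
  have e : ∑' k : ℤ, f 0 k * f 0 k = ∑' k : ℤ, f 0 k ^ 2 :=
    tsum_congr fun k => by ring
  rw [e] at h; linarith
section Avals
variable {u : ℤ → ℤ → ℝ} (hsq : Sq u) (hb : Nb u)
include hsq hb

lemma valA1 : ipH (D10 u) (L1 u) = 0 := alem hsq hb

lemma valA2 : ipH (D10 u) (L2 u) = -(1/2) * ∑' k : ℤ, u 0 k * L2 u 0 k := by
  have h := jlem hsq (sq_L2 hsq) hb (nb_L2 hb)
  have e : ipH u (D10 (L2 u)) = ipH (D10 u) (L2 u) := by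
    rw [cD10L2 u, ksym hsq (sq_D10 hsq hb), ipH_comm]
  linarith

lemma valA3 : ipH (D10 u) (D10 (D20 u)) = 0 := by
  rw [cDD u]
  have h := kskew (sq_D10 hsq hb) (sq_D10 hsq hb)
  have c : ipH (D20 (D10 u)) (D10 u) = ipH (D10 u) (D20 (D10 u)) := ipH_comm _ _
  linarith

lemma valA4 : ipH (D10 u) (L1 (L2 u)) = 0 := by
  rw [cL1L2' u, kadj (sq_D10 hsq hb) (sq_D2m (sq_L1 hsq hb)), cD2mD10 u, cD2mL1 u,
    alem (sq_D2m hsq) (nb_D2m hb)]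
  norm_num

lemma valA5 : ipH (D20 u) (L1 u) = 0 := by
  have c1 : ipH (D20 u) (L1 u) = ipH (L1 u) (D20 u) := ipH_comm _ _
  have h2 := kskew (sq_L1 hsq hb) hsq
  have e : ipH (D20 (L1 u)) u = ipH (L1 (D20 u)) u := by rw [cD20L1 u]
  have h3 := jsym (sq_D20 hsq) hsq (nb_D20 hb) hb
  linarith

lemma valA6 : ipH (D20 u) (L2 u) = 0 := by
  have h1 := ksym (sq_D20 hsq) hsq
  have e : ipH (L2 (D20 u)) u = ipH (D20 (L2 u)) u := by rw [cD20L2 u]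
  have c : ipH (D20 (L2 u)) u = ipH u (D20 (L2 u)) := ipH_comm _ _
  have h2 := kskew hsq (sq_L2 hsq)
  linarith

lemma valA7 : ipH (D20 u) (D10 (D20 u)) = -(1/2) * ∑' k : ℤ, D20 u 0 k ^ 2 :=
  blem (sq_D20 hsq) (nb_D20 hb)

lemma valA8 : ipH (D20 u) (L1 (L2 u)) = 0 := by
  have e0 : ipH (D20 u) (L1 (L2 u)) = ipH (D20 u) (L2 (L1 u)) := by rw [cL1L2 u]
  have h1 := ksym (sq_D20 hsq) (sq_L1 hsq hb)
  have h2 := jsym (sq_L2 (sq_D20 hsq)) hsq (nb_L2 (nb_D20 hb)) hb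
  have e2 : ipH (L1 (L2 (D20 u))) u = ipH (L2 (D20 (L1 u))) u := by rw [cL1L2'' u]
  have c2 : ipH (L2 (D20 (L1 u))) u = ipH u (L2 (D20 (L1 u))) := ipH_comm _ _
  have h3 := ksym hsq (sq_D20 (sq_L1 hsq hb))
  have h4 := kskew (sq_L2 hsq) (sq_L1 hsq hb)
  have e4 : ipH (D20 (L2 u)) (L1 u) = ipH (L2 (D20 u)) (L1 u) := by rw [cD20L2 u]
  linarith

end Avals

lemma sq_wop (α β : ℝ) (u : ℤ → ℤ → ℝ) (h1 : Sq (L1 u)) (h2 : Sq (L2 u))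
    (h3 : Sq (D10 (D20 u))) (h4 : Sq (L1 (L2 u))) : Sq (wop α β u) := by
  apply sq_congr _ (sq_add (sq_add (sq_add (sq_smul (-(α^2/2)) h1) (sq_smul (-(β^2/2)) h2))
    (sq_smul (-(α*β)) h3)) (sq_smul ((α^2+β^2)/8) h4))
  intro j k; unfold wop; ring

lemma expand_w (α β : ℝ) (u F : ℤ → ℤ → ℝ) (hF : Sq F) (h1 : Sq (L1 u)) (h2 : Sq (L2 u))
    (h3 : Sq (D10 (D20 u))) (h4 : Sq (L1 (L2 u))) :
    ipH F (wop α β u) = (-(α^2/2)) * ipH F (L1 u) + (-(β^2/2)) * ipH F (L2 u)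
      + (-(α*β)) * ipH F (D10 (D20 u)) + ((α^2+β^2)/8) * ipH F (L1 (L2 u)) := by
  have hA := prodSum (f := F) (g := L1 u) hF h1
  have hB := prodSum (f := F) (g := L2 u) hF h2
  have hC := prodSum (f := F) (g := D10 (D20 u)) hF h3
  have hD := prodSum (f := F) (g := L1 (L2 u)) hF h4
  unfold ipH
  rw [← comb4 (-(α^2/2)) (-(β^2/2)) (-(α*β)) ((α^2+β^2)/8) hA hB hC hD]
  apply tsum_congr; intro p; unfold wop; ring

lemma expand_v (α β : ℝ) (u g : ℤ → ℤ → ℝ) (h10 : Sq (D10 u)) (h20 : Sq (D20 u)) (hg : Sq g) :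
    ipH (vop α β u) g = (-α) * ipH (D10 u) g + (-β) * ipH (D20 u) g := by
  have hA := prodSum (f := D10 u) (g := g) h10 hg
  have hB := prodSum (f := D20 u) (g := g) h20 hg
  unfold ipH
  rw [← comb2 (-α) (-β) hA hB]
  apply tsum_congr; intro p; unfold vop; ring

-- 1-D machinery over ℤ
lemma zmove (G : ℤ → ℝ) (t : ℤ) : ∑' k, G (k + t) = ∑' k, G k := (Equiv.addRight t).tsum_eq G

lemma sq1_k {r : ℤ → ℝ} (t : ℤ) (hr : Summable (fun k => r k ^ 2)) :
    Summable (fun k => r (k + t) ^ 2) :=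
  ((Equiv.addRight t).summable_iff (f := fun k => r k ^ 2)).2 hr

lemma sq1_km {r : ℤ → ℝ} (hr : Summable (fun k => r k ^ 2)) :
    Summable (fun k => r (k - 1) ^ 2) := by
  have := sq1_k (-1) hr
  apply this.congr; intro k; norm_num [sub_eq_add_neg]

lemma prod1d {a b : ℤ → ℝ} (ha : Summable (fun k => a k ^ 2)) (hb : Summable (fun k => b k ^ 2)) :
    Summable (fun k => a k * b k) := by
  apply Summable.of_abs
  apply Summable.of_nonneg_of_le (fun p => abs_nonneg _) (fun p => ?_) ((ha.add hb).div_const 2)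
  rw [abs_mul]
  calc |a p| * |b p| ≤ (|a p| ^ 2 + |b p| ^ 2) / 2 := by nlinarith [sq_nonneg (|a p| - |b p|)]
  _ = (a p ^ 2 + b p ^ 2) / 2 := by rw [sq_abs, sq_abs]

lemma rowId {r : ℤ → ℝ} (hr : Summable (fun k => r k ^ 2)) :
    ∑' k : ℤ, r k * (r (k + 2) - 2 * r (k + 1) + r k)
      = -(∑' k : ℤ, r k * (r (k + 1) - 2 * r k + r (k - 1)))
        - 2 * ∑' k : ℤ, ((r (k + 1) - r (k - 1)) / 2) ^ 2 := by
  have hq1 : Summable (fun k : ℤ => r k * r (k + 1)) :=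
    prod1d (a := r) (b := fun k => r (k + 1)) hr (sq1_k 1 hr)
  have hq2 : Summable (fun k : ℤ => r k * r (k + 2)) :=
    prod1d (a := r) (b := fun k => r (k + 2)) hr (sq1_k 2 hr)
  have hqm : Summable (fun k : ℤ => r k * r (k - 1)) :=
    prod1d (a := r) (b := fun k => r (k - 1)) hr (sq1_km hr)
  have hpm : Summable (fun k : ℤ => r (k + 1) * r (k - 1)) :=
    prod1d (a := fun k => r (k + 1)) (b := fun k => r (k - 1)) (sq1_k 1 hr) (sq1_km hr)
  have hs1 : Summable (fun k : ℤ => r (k + 1) ^ 2) := sq1_k 1 hr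
  have hsm : Summable (fun k : ℤ => r (k - 1) ^ 2) := sq1_km hr
  have eL : ∑' k : ℤ, r k * (r (k + 2) - 2 * r (k + 1) + r k)
      = 1 * (∑' k : ℤ, r k * r (k + 2)) + (-2) * (∑' k : ℤ, r k * r (k + 1))
        + 1 * ∑' k : ℤ, r k ^ 2 := by
    rw [← comb3 1 (-2) 1 hq2 hq1 hr]
    apply tsum_congr; intro k; ring
  have eSa : ∑' k : ℤ, r k * (r (k + 1) - 2 * r k + r (k - 1))
      = 1 * (∑' k : ℤ, r k * r (k + 1)) + (-2) * (∑' k : ℤ, r k ^ 2)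
        + 1 * ∑' k : ℤ, r k * r (k - 1) := by
    rw [← comb3 1 (-2) 1 hq1 hr hqm]
    apply tsum_congr; intro k; ring
  have eSb : ∑' k : ℤ, ((r (k + 1) - r (k - 1)) / 2) ^ 2
      = (1/4) * (∑' k : ℤ, r (k + 1) ^ 2) + (1/4) * (∑' k : ℤ, r (k - 1) ^ 2)
        + (-(1/2)) * ∑' k : ℤ, r (k + 1) * r (k - 1) := by
    rw [← comb3 (1/4) (1/4) (-(1/2)) hs1 hsm hpm]
    apply tsum_congr; intro k; ring
  have m1 : ∑' k : ℤ, r k * r (k - 1) = ∑' k : ℤ, r k * r (k + 1) := by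
    have h := zmove (fun k => r (k + 1) * r k) (-1)
    have e1 : ∑' k : ℤ, r (k + -1 + 1) * r (k + -1) = ∑' k : ℤ, r k * r (k - 1) := by
      apply tsum_congr; intro k
      rw [show k + -1 + 1 = k by ring, show k + -1 = k - 1 by ring]
    have e2 : ∑' k : ℤ, r (k + 1) * r k = ∑' k : ℤ, r k * r (k + 1) :=
      tsum_congr fun k => mul_comm _ _
    rw [← e1, h, e2]
  have m2 : ∑' k : ℤ, r (k + 1) * r (k - 1) = ∑' k : ℤ, r k * r (k + 2) := by
    have h := zmove (fun k => r (k + 2) * r k) (-1)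
    have e1 : ∑' k : ℤ, r (k + -1 + 2) * r (k + -1) = ∑' k : ℤ, r (k + 1) * r (k - 1) := by
      apply tsum_congr; intro k
      rw [show k + -1 + 2 = k + 1 by ring, show k + -1 = k - 1 by ring]
    have e2 : ∑' k : ℤ, r (k + 2) * r k = ∑' k : ℤ, r k * r (k + 2) :=
      tsum_congr fun k => mul_comm _ _
    rw [← e1, h, e2]
  have m3 : ∑' k : ℤ, r (k + 1) ^ 2 = ∑' k : ℤ, r k ^ 2 := zmove (fun k => r k ^ 2) 1
  have m4 : ∑' k : ℤ, r (k - 1) ^ 2 = ∑' k : ℤ, r k ^ 2 := by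
    have h := zmove (fun k => r k ^ 2) (-1)
    rw [← h]; apply tsum_congr; intro k; rw [show k + -1 = k - 1 by ring]
  rw [eL, eSa, eSb, m1, m2, m3, m4]; ring

/-- Lemma 4 (ii): boundary term produced by the scalar product of `v` and `w`
in the half-space. -/
theorem halfspace_vw_boundary (a b lam mu : ℝ) (ha : a < 0) (hlam : 0 < lam) (hmu : 0 < mu)
    (u : ℤ → ℤ → ℝ) (hu : memH u) :
    2 * ipH (vop (lam * a) (mu * b) u) (wop (lam * a) (mu * b) u) =
      -(lam * |a| * (mu * b) ^ 2 / 2) * ∑' k : ℤ, u 0 k * L2 u 0 (k + 1) := by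
  obtain ⟨hb, hsq⟩ := hu
  have hb : Nb u := hb
  have hsq : Sq u := hsq
  have h1 : Sq (L1 u) := sq_L1 hsq hb
  have h2 : Sq (L2 u) := sq_L2 hsq
  have h3 : Sq (D10 (D20 u)) := sq_D10 (sq_D20 hsq) (nb_D20 hb)
  have h4 : Sq (L1 (L2 u)) := sq_L1 (sq_L2 hsq) (nb_L2 hb)
  have h10 : Sq (D10 u) := sq_D10 hsq hb
  have h20 : Sq (D20 u) := sq_D20 hsq
  have hw : Sq (wop (lam * a) (mu * b) u) := sq_wop _ _ u h1 h2 h3 h4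
  have Ev := expand_v (lam * a) (mu * b) u (wop (lam * a) (mu * b) u) h10 h20 hw
  have Ew1 := expand_w (lam * a) (mu * b) u (D10 u) h10 h1 h2 h3 h4
  have Ew2 := expand_w (lam * a) (mu * b) u (D20 u) h20 h1 h2 h3 h4
  rw [Ew1, Ew2] at Ev
  rw [valA1 hsq hb, valA2 hsq hb, valA3 hsq hb, valA4 hsq hb, valA5 hsq hb, valA6 hsq hb,
    valA7 hsq hb, valA8 hsq hb] at Ev
  have hrow : Summable (fun k : ℤ => u 0 k ^ 2) := by
    have := fiber_summable (fun p : ℕ × ℤ => u (p.1 : ℤ) p.2 ^ 2) hsq 0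
    simpa using this
  have hrid := rowId (r := u 0) hrow
  have eT : ∑' k : ℤ, u 0 k * L2 u 0 (k + 1)
      = ∑' k : ℤ, u 0 k * (u 0 (k + 2) - 2 * u 0 (k + 1) + u 0 k) :=
    tsum_congr fun k => by
      rw [L2_eq, show k + 1 + 1 = k + 2 by ring, show k + 1 - 1 = k by ring]
  have eSa : ∑' k : ℤ, u 0 k * L2 u 0 k
      = ∑' k : ℤ, u 0 k * (u 0 (k + 1) - 2 * u 0 k + u 0 (k - 1)) :=
    tsum_congr fun k => by rw [L2_eq]
  have eSb : ∑' k : ℤ, D20 u 0 k ^ 2 = ∑' k : ℤ, ((u 0 (k + 1) - u 0 (k - 1)) / 2) ^ 2 :=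
    tsum_congr fun k => by rw [D20_eq]
  have hrel : ∑' k : ℤ, u 0 k * L2 u 0 (k + 1)
      = -(∑' k : ℤ, u 0 k * L2 u 0 k) - 2 * ∑' k : ℤ, D20 u 0 k ^ 2 := by
    rw [eT, eSa, eSb]; exact hrid
  rw [Ev, abs_of_neg ha, hrel]; ring
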